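/- Let m_2c(z) be the Stieltjes transform of a probability measure ρ on [0, ∞) whose support is contained in [0, λ_r] and which satisfies ρ(x) ∼ sqrt(λ_r − x) near λ_r (i.e. c·sqrt(λ_r−x) ≤ ρ(x) ≤ C·sqrt(λ_r−x) for x ∈ [λ_r − 2c̃, λ_r]). Then for z = E + iη with E ≥ λ_r, κ := E − λ_r, and κ + η ≤ c̃, one has Im m_2c(z) ≤ C' η/√(κ + η) for a constant C' depending only on c, C, c̃, λ_r. -/

import Mathlib

open MeasureTheory
open scoped ENNReal NNReal

private lemma aux_far (ctil lr : ℝ) (hctil : 0 < ctil) (hlr : 0 < lr)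
    (ρ : Measure ℝ) (hρ : IsProbabilityMeasure ρ)
    (hsupp : ∀ᵐ x ∂ρ, x ∈ Set.Icc 0 lr)
    (E η : ℝ) (hE : lr ≤ E) (hη : 0 < η) (s : ℝ) (hs_def : s = (E - lr) + η)
    (hsc : s ≤ ctil) (hs0 : 0 < s) (hsqs : 0 < Real.sqrt s)
    (A : Set ℝ) (hA_def : A = Set.Icc (lr - 2 * ctil) lr) (hA : MeasurableSet A)
    (f : ℝ → ℝ) (hf_def : f = fun x => η / ((x - E) ^ 2 + η ^ 2))
    (hden : ∀ x : ℝ, (0:ℝ) < (x - E) ^ 2 + η ^ 2)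
    (hf_nonneg : ∀ x, 0 ≤ f x) (hint : Integrable f ρ) :
    (∫ x in Aᶜ, f x ∂ρ) ≤ Real.sqrt ctil / (4 * ctil ^ 2) * η / Real.sqrt s := by
  have hbd : ∀ᵐ x ∂(ρ.restrict Aᶜ), f x ≤ η / (4 * ctil ^ 2) := by
    filter_upwards [ae_restrict_of_ae hsupp, ae_restrict_mem hA.compl] with x hx hxc
    have hx1 : x ≤ lr := hx.2
    have hx2 : x < lr - 2 * ctil := by
      by_contra h
      exact hxc (by rw [hA_def]; exact ⟨le_of_not_gt h, hx1⟩)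
    have h4 : (2 * ctil) ^ 2 ≤ (x - E) ^ 2 + η ^ 2 := by nlinarith
    rw [hf_def]
    rw [div_le_div_iff₀ (hden x) (by positivity)]
    nlinarith
  have h1 : (∫ x in Aᶜ, f x ∂ρ) ≤ ∫ _x in Aᶜ, η / (4 * ctil ^ 2) ∂ρ := by
    refine integral_mono_ae hint.restrict (integrable_const _) hbd
  have h2 : (∫ _x in Aᶜ, η / (4 * ctil ^ 2) ∂ρ) ≤ η / (4 * ctil ^ 2) := by
    rw [setIntegral_const]
    have : (ρ Aᶜ).toReal ≤ 1 := by
      have := prob_le_one (μ := ρ) (s := Aᶜ)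
      exact (ENNReal.toReal_le_of_le_ofReal one_pos.le (by simpa using this))
    calc (ρ Aᶜ).toReal • (η / (4 * ctil ^ 2)) ≤ 1 * (η / (4 * ctil ^ 2)) := by
          rw [smul_eq_mul]; exact mul_le_mul_of_nonneg_right this (by positivity)
      _ = η / (4 * ctil ^ 2) := one_mul _
  refine h1.trans (h2.trans ?_)
  rw [div_le_div_iff₀ (by positivity) hsqs]
  have hsq : Real.sqrt s ≤ Real.sqrt ctil := Real.sqrt_le_sqrt hsc
  calc η * Real.sqrt s ≤ η * Real.sqrt ctil := mul_le_mul_of_nonneg_left hsq hη.le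
    _ = Real.sqrt ctil / (4 * ctil ^ 2) * η * (4 * ctil ^ 2) := by field_simp

private lemma aux_B2 (C ctil lr : ℝ) (hC : 0 < C) (hctil : 0 < ctil) (hlr : 0 < lr)
    (E η : ℝ) (hE : lr ≤ E) (hη : 0 < η) (s : ℝ) (hs_def : s = (E - lr) + η)
    (hsc : s ≤ ctil) (hs0 : 0 < s) (hsqs : 0 < Real.sqrt s)
    (f : ℝ → ℝ) (hf_def : f = fun x => η / ((x - E) ^ 2 + η ^ 2))
    (hden : ∀ x : ℝ, (0:ℝ) < (x - E) ^ 2 + η ^ 2)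
    (hf_cont : Continuous f)
    (hf_nonneg : ∀ x, 0 ≤ f x)
    (h : ℝ → ℝ) (hh_def : h = fun x => C * Real.sqrt (lr - x) * f x)
    (hh_cont : Continuous h) (hκ : E - lr ≥ 0) (hs2c : s ≤ 2 * ctil) :
    (∫ x in Set.Icc (lr - 2 * ctil) (lr - s), h x) ≤ 2 * C * η / Real.sqrt s := by
  have hab : lr - 2 * ctil ≤ lr - s := by linarith
  set r : ℝ → ℝ := fun x => C * η * (lr - x) ^ (-(3:ℝ)/2) with hr_def
  have hb : ∀ x ∈ Set.Icc (lr - 2 * ctil) (lr - s), h x ≤ r x := by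
    intro x hx
    have hu : 0 < lr - x := by have := hx.2; linarith
    have hslr : s ≤ lr - x := by have := hx.2; linarith
    have hf_le : f x ≤ η / (lr - x) ^ 2 := by
      rw [hf_def]
      rw [div_le_div_iff₀ (hden x) (by positivity)]
      have hEx : lr - x ≤ E - x := by linarith
      have hsq : (lr - x) ^ 2 ≤ (E - x) ^ 2 := pow_le_pow_left₀ hu.le hEx 2
      nlinarith [hsq, hη, sq_nonneg η]
    have hrpow : (lr - x) ^ (-(3:ℝ)/2) = Real.sqrt (lr - x) / (lr - x) ^ 2 := by
      rw [Real.sqrt_eq_rpow, ← Real.rpow_natCast (lr - x) 2, ← Real.rpow_sub hu]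
      norm_num
    rw [hh_def, hr_def]
    simp only
    rw [hrpow]
    have h1 : C * Real.sqrt (lr - x) * f x ≤ C * Real.sqrt (lr - x) * (η / (lr - x) ^ 2) := by
      apply mul_le_mul_of_nonneg_left hf_le (by positivity)
    refine h1.trans (le_of_eq (by ring))
  have hrint : IntegrableOn r (Set.Icc (lr - 2 * ctil) (lr - s)) volume := by
    apply ContinuousOn.integrableOn_Icc
    apply ContinuousOn.mul continuousOn_const
    apply ContinuousOn.rpow_const (by fun_prop)
    intro x hx
    left
    have := hx.2
    have : 0 < lr - x := by simp at hx ⊢; linarith [hx.2]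
    linarith
  have h1 := setIntegral_mono_on hh_cont.integrableOn_Icc hrint measurableSet_Icc hb
  refine h1.trans ?_
  -- compute the integral of r
  have h2 : (∫ x in Set.Icc (lr - 2 * ctil) (lr - s), r x)
      = ∫ x in (lr - 2 * ctil)..(lr - s), r x := by
    rw [intervalIntegral.integral_of_le hab, integral_Icc_eq_integral_Ioc]
  rw [h2, hr_def]
  simp only
  rw [intervalIntegral.integral_const_mul]
  have h3 : (∫ x in (lr - 2 * ctil)..(lr - s), (lr - x) ^ (-(3:ℝ)/2))
      = ∫ x in (lr - (lr - s))..(lr - (lr - 2 * ctil)), x ^ (-(3:ℝ)/2) :=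
    intervalIntegral.integral_comp_sub_left (fun u => u ^ (-(3:ℝ)/2)) lr
  rw [h3]
  have e1 : lr - (lr - s) = s := by ring
  have e2 : lr - (lr - 2 * ctil) = 2 * ctil := by ring
  rw [e1, e2]
  have h4 : (∫ x in s..(2 * ctil), x ^ (-(3:ℝ)/2))
      = ((2 * ctil) ^ (-(3:ℝ)/2 + 1) - s ^ (-(3:ℝ)/2 + 1)) / (-(3:ℝ)/2 + 1) := by
    apply integral_rpow
    right
    constructor
    · norm_num
    · rw [Set.uIcc_of_le hs2c]
      intro h0
      exact absurd h0.1 (by linarith)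
  rw [h4]
  have hv : ((2 * ctil) ^ (-(3:ℝ)/2 + 1) - s ^ (-(3:ℝ)/2 + 1)) / (-(3:ℝ)/2 + 1)
      ≤ 2 / Real.sqrt s := by
    have hn : -(3:ℝ)/2 + 1 = -(1/2 : ℝ) := by norm_num
    rw [hn]
    have hc0 : (0:ℝ) ≤ (2 * ctil) ^ (-(1/2:ℝ)) := Real.rpow_nonneg (by linarith) _
    have hs' : s ^ (-(1/2:ℝ)) = 1 / Real.sqrt s := by
      rw [Real.rpow_neg hs0.le, Real.sqrt_eq_rpow]
      exact (one_div _).symm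
    have : ((2 * ctil) ^ (-(1/2:ℝ)) - s ^ (-(1/2:ℝ))) / (-(1/2:ℝ))
        = 2 * (s ^ (-(1/2:ℝ)) - (2 * ctil) ^ (-(1/2:ℝ))) := by ring
    rw [this, hs']
    have : 2 * (1 / Real.sqrt s - (2 * ctil) ^ (-(1/2:ℝ))) ≤ 2 * (1 / Real.sqrt s) := by
      nlinarith
    refine this.trans (le_of_eq (by ring))
  calc C * η * (((2 * ctil) ^ (-(3:ℝ)/2 + 1) - s ^ (-(3:ℝ)/2 + 1)) / (-(3:ℝ)/2 + 1))
      ≤ C * η * (2 / Real.sqrt s) := mul_le_mul_of_nonneg_left hv (by positivity)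
    _ = 2 * C * η / Real.sqrt s := by ring

private lemma aux_main (C ctil lr : ℝ) (hC : 0 < C) (hctil : 0 < ctil) (hlr : 0 < lr)
    (E η : ℝ) (hE : lr ≤ E) (hη : 0 < η) (s : ℝ) (hs_def : s = (E - lr) + η)
    (hsc : s ≤ ctil) (hs0 : 0 < s) (hsqs : 0 < Real.sqrt s)
    (f : ℝ → ℝ) (hf_def : f = fun x => η / ((x - E) ^ 2 + η ^ 2))
    (hden : ∀ x : ℝ, (0:ℝ) < (x - E) ^ 2 + η ^ 2)
    (hf_cont : Continuous f)
    (hf_nonneg : ∀ x, 0 ≤ f x) :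
    (∫ x in Set.Icc (lr - 2 * ctil) lr, C * Real.sqrt (lr - x) * f x)
      ≤ 4 * C * η / Real.sqrt s := by
  set h : ℝ → ℝ := fun x => C * Real.sqrt (lr - x) * f x with hh_def
  have hh_cont : Continuous h := by rw [hh_def]; fun_prop
  have hκ : E - lr ≥ 0 := by linarith
  have hs2c : s ≤ 2 * ctil := by linarith
  have hsplit : Set.Icc (lr - 2 * ctil) lr
      = Set.Icc (lr - 2 * ctil) (lr - s) ∪ Set.Ioc (lr - s) lr :=
    (Set.Icc_union_Ioc_eq_Icc (by linarith) (by linarith)).symm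
  rw [hsplit, setIntegral_union ((Set.Iic_disjoint_Ioc le_rfl).mono Set.Icc_subset_Iic_self le_rfl) measurableSet_Ioc
    hh_cont.integrableOn_Icc hh_cont.integrableOn_Ioc]
  have hB1 : (∫ x in Set.Ioc (lr - s) lr, h x) ≤ 2 * C * η / Real.sqrt s := by
    have hb : ∀ x ∈ Set.Ioc (lr - s) lr, h x ≤ 2 * C * η / (s * Real.sqrt s) := by
      intro x hx
      have h1 : lr - x ≤ s := by have := hx.1; linarith
      have h2 : Real.sqrt (lr - x) ≤ Real.sqrt s := Real.sqrt_le_sqrt h1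
      have h3 : s ^ 2 / 2 ≤ (x - E) ^ 2 + η ^ 2 := by
        have hxE : E - lr ≤ E - x := by have := hx.2; linarith
        nlinarith [sq_nonneg ((E - lr) - η), sq_nonneg (E - x)]
      have h4 : f x ≤ 2 * η / s ^ 2 := by
        rw [hf_def]
        rw [div_le_div_iff₀ (hden x) (by positivity)]
        nlinarith
      have h5 : h x ≤ C * Real.sqrt s * (2 * η / s ^ 2) := by
        rw [hh_def]
        have := hf_nonneg x
        apply mul_le_mul (by nlinarith [Real.sqrt_nonneg (lr - x)]) h4 this
        positivity
      refine h5.trans (le_of_eq ?_)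
      have hss : Real.sqrt s * Real.sqrt s = s := Real.mul_self_sqrt hs0.le
      rw [eq_div_iff (by positivity)]
      field_simp
      linear_combination hss
    have hcint : IntegrableOn (fun _ : ℝ => 2 * C * η / (s * Real.sqrt s)) (Set.Ioc (lr - s) lr) volume :=
      continuous_const.integrableOn_Ioc
    have := setIntegral_mono_on hh_cont.integrableOn_Ioc hcint measurableSet_Ioc hb
    refine this.trans ?_
    rw [setIntegral_const, measureReal_def, Real.volume_Ioc, smul_eq_mul]
    have : (ENNReal.ofReal (lr - (lr - s))).toReal = s := by
      rw [ENNReal.toReal_ofReal (by linarith)]; ring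
    rw [this]
    refine le_of_eq ?_
    rw [eq_div_iff hsqs.ne']
    field_simp
  have hB2 : (∫ x in Set.Icc (lr - 2 * ctil) (lr - s), h x) ≤ 2 * C * η / Real.sqrt s :=
    aux_B2 C ctil lr hC hctil hlr E η hE hη s hs_def hsc hs0 hsqs f hf_def hden hf_cont
      hf_nonneg h hh_def hh_cont hκ hs2c
  calc _ ≤ 2 * C * η / Real.sqrt s + 2 * C * η / Real.sqrt s := add_le_add hB2 hB1
    _ = 4 * C * η / Real.sqrt s := by ring

private lemma aux_near (c C ctil lr : ℝ) (hc : 0 < c) (hC : 0 < C) (hctil : 0 < ctil) (hlr : 0 < lr)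
    (ρ : Measure ℝ) (hρ : IsProbabilityMeasure ρ)
    (E η : ℝ) (hE : lr ≤ E) (hη : 0 < η) (s : ℝ) (hs_def : s = (E - lr) + η)
    (hsc : s ≤ ctil) (hs0 : 0 < s) (hsqs : 0 < Real.sqrt s)
    (A : Set ℝ) (hA_def : A = Set.Icc (lr - 2 * ctil) lr) (hA : MeasurableSet A)
    (g : ℝ → ℝ)
    (hg : ρ.restrict (Set.Icc (lr - 2 * ctil) lr)
          = ((volume.restrict (Set.Icc (lr - 2 * ctil) lr)).withDensity
              fun x => ENNReal.ofReal (g x)))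
    (hgb : ∀ x ∈ Set.Icc (lr - 2 * ctil) lr,
          c * Real.sqrt (lr - x) ≤ g x ∧ g x ≤ C * Real.sqrt (lr - x))
    (f : ℝ → ℝ) (hf_def : f = fun x => η / ((x - E) ^ 2 + η ^ 2))
    (hden : ∀ x : ℝ, (0:ℝ) < (x - E) ^ 2 + η ^ 2)
    (hf_cont : Continuous f)
    (hf_nonneg : ∀ x, 0 ≤ f x) (hf_bdd : ∀ x, f x ≤ 1 / η)
    (hmain : (∫ x in A, C * Real.sqrt (lr - x) * f x) ≤ 4 * C * η / Real.sqrt s) :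
    (∫ x in A, f x ∂ρ) ≤ 4 * C * η / Real.sqrt s := by
  set d : ℝ → ℝ≥0 := fun x => Real.toNNReal (C * Real.sqrt (lr - x)) with hd_def
  have hd_cont : Continuous fun x => (d x : ℝ) := by
    rw [hd_def]
    simp only [Real.coe_toNNReal']
    fun_prop
  have hd_meas : Measurable d := by
    have : Continuous d := continuous_real_toNNReal.comp (by fun_prop)
    exact this.measurable
  set ν : Measure ℝ := (volume.restrict A).withDensity (fun x => (d x : ℝ≥0∞)) with hν_def
  have hle : ρ.restrict A ≤ ν := by
    rw [hA_def, hg, hν_def, hA_def]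
    refine withDensity_mono ?_
    rw [Filter.EventuallyLE, ae_restrict_iff' measurableSet_Icc]
    filter_upwards with x hx
    exact ENNReal.ofReal_le_ofReal (hgb x hx).2
  have hints : Integrable (fun x => (d x : ℝ) • f x) (volume.restrict A) := by
    rw [hA_def]
    simp only [smul_eq_mul]
    exact (hd_cont.mul hf_cont).integrableOn_Icc
  have hintν : Integrable f ν := by
    rw [hν_def]
    exact (integrable_withDensity_iff_integrable_smul hd_meas).2 hints
  have h1 : (∫ x in A, f x ∂ρ) ≤ ∫ x, f x ∂ν :=
    integral_mono_measure hle (Filter.Eventually.of_forall hf_nonneg) hintν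
  refine h1.trans ?_
  rw [hν_def, integral_withDensity_eq_integral_smul hd_meas]
  have heq : (∫ x in A, d x • f x ∂volume) = ∫ x in A, C * Real.sqrt (lr - x) * f x := by
    refine setIntegral_congr_fun hA fun x _ => ?_
    rw [hd_def, NNReal.smul_def, smul_eq_mul]
    congr 1
    exact Real.coe_toNNReal _ (by positivity)
  rw [heq]
  exact hmain

/-- If `ρ` is a probability measure supported in `[0, lr]` whose density near the right
edge `lr` is comparable to `√(lr - x)`, then for `z = E + iη` with `E ≥ lr`,
`κ = E - lr` and `κ + η ≤ c̃`, one has `Im m(z) = ∫ η/((x-E)² + η²) dρ ≤ C' η/√(κ + η)`,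
with `C'` depending only on `c, C, c̃, lr`. -/
theorem stmt16 (c C ctil lr : ℝ) (hc : 0 < c) (hC : 0 < C) (hctil : 0 < ctil)
    (hlr : 0 < lr) :
    ∃ C' > (0 : ℝ), ∀ (ρ : Measure ℝ), IsProbabilityMeasure ρ →
      (∀ᵐ x ∂ρ, x ∈ Set.Icc 0 lr) →
      ∀ g : ℝ → ℝ,
        ρ.restrict (Set.Icc (lr - 2 * ctil) lr)
          = ((volume.restrict (Set.Icc (lr - 2 * ctil) lr)).withDensity
              fun x => ENNReal.ofReal (g x)) →
        (∀ x ∈ Set.Icc (lr - 2 * ctil) lr,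
          c * Real.sqrt (lr - x) ≤ g x ∧ g x ≤ C * Real.sqrt (lr - x)) →
        ∀ E η : ℝ, lr ≤ E → 0 < η → (E - lr) + η ≤ ctil →
          (∫ x, η / ((x - E) ^ 2 + η ^ 2) ∂ρ) ≤ C' * η / Real.sqrt ((E - lr) + η) := by
  refine ⟨4 * C + Real.sqrt ctil / (4 * ctil ^ 2), by positivity, ?_⟩
  intro ρ hρ hsupp g hg hgb E η hE hη hsc
  have hs0 : 0 < (E - lr) + η := by linarith
  have hsqs : 0 < Real.sqrt ((E - lr) + η) := Real.sqrt_pos.mpr hs0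
  have hden : ∀ x : ℝ, (0:ℝ) < (x - E) ^ 2 + η ^ 2 := fun x => by positivity
  have hf_cont : Continuous (fun x : ℝ => η / ((x - E) ^ 2 + η ^ 2)) := by
    apply continuous_const.div
    · fun_prop
    · intro x; exact (hden x).ne'
  have hf_nonneg : ∀ x : ℝ, 0 ≤ η / ((x - E) ^ 2 + η ^ 2) := fun x => by
    have := hden x; positivity
  have hf_bdd : ∀ x : ℝ, η / ((x - E) ^ 2 + η ^ 2) ≤ 1 / η := fun x => by
    rw [div_le_div_iff₀ (hden x) hη]
    nlinarith [sq_nonneg (x - E)]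
  have hint : Integrable (fun x : ℝ => η / ((x - E) ^ 2 + η ^ 2)) ρ := by
    refine (integrable_const (1/η)).mono' hf_cont.aestronglyMeasurable ?_
    filter_upwards with x
    rw [Real.norm_eq_abs, abs_of_nonneg (hf_nonneg x)]
    exact hf_bdd x
  have hsplit : (∫ x, η / ((x - E) ^ 2 + η ^ 2) ∂ρ)
      = (∫ x in Set.Icc (lr - 2 * ctil) lr, η / ((x - E) ^ 2 + η ^ 2) ∂ρ)
        + ∫ x in (Set.Icc (lr - 2 * ctil) lr)ᶜ, η / ((x - E) ^ 2 + η ^ 2) ∂ρ :=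
    (integral_add_compl measurableSet_Icc hint).symm
  have hfar := aux_far ctil lr hctil hlr ρ hρ hsupp E η hE hη ((E - lr) + η) rfl hsc hs0 hsqs
    (Set.Icc (lr - 2 * ctil) lr) rfl measurableSet_Icc
    (fun x : ℝ => η / ((x - E) ^ 2 + η ^ 2)) rfl hden hf_nonneg hint
  have hmain := aux_main C ctil lr hC hctil hlr E η hE hη ((E - lr) + η) rfl hsc hs0 hsqs
    (fun x : ℝ => η / ((x - E) ^ 2 + η ^ 2)) rfl hden hf_cont hf_nonneg
  have hnear := aux_near c C ctil lr hc hC hctil hlr ρ hρ E η hE hη ((E - lr) + η) rfl hsc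
    hs0 hsqs (Set.Icc (lr - 2 * ctil) lr) rfl measurableSet_Icc g hg hgb
    (fun x : ℝ => η / ((x - E) ^ 2 + η ^ 2)) rfl hden hf_cont hf_nonneg hf_bdd hmain
  calc (∫ x, η / ((x - E) ^ 2 + η ^ 2) ∂ρ)
      = (∫ x in Set.Icc (lr - 2 * ctil) lr, η / ((x - E) ^ 2 + η ^ 2) ∂ρ)
        + ∫ x in (Set.Icc (lr - 2 * ctil) lr)ᶜ, η / ((x - E) ^ 2 + η ^ 2) ∂ρ := hsplit
    _ ≤ 4 * C * η / Real.sqrt ((E - lr) + η)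
        + Real.sqrt ctil / (4 * ctil ^ 2) * η / Real.sqrt ((E - lr) + η) :=
        add_le_add hnear hfar
    _ = (4 * C + Real.sqrt ctil / (4 * ctil ^ 2)) * η / Real.sqrt ((E - lr) + η) := by ring
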